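/- Prefixing the order and the boundary number alone does not determine a graph from boundary distances: there exist two non-isomorphic connected simple graphs G₁ and G₂ on the same vertex set of cardinality 6, both with boundary number κ(G₁) = κ(G₂) = 5, and a 5-element vertex subset S such that S = ∂(G₁), S ≠ ∂(G₂), and d_{G₁}(x,y) = d_{G₂}(x,y) for all x, y ∈ S. -/

import Mathlib

open SimpleGraph

def gBoundary {V : Type*} (G : SimpleGraph V) : Set V :=
  {v | ∃ u, ∀ w, G.Adj v w → G.dist u w ≤ G.dist u v}

noncomputable def gEcc {V : Type*} [Fintype V] (G : SimpleGraph V) (v : V) : ℕ :=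
  Finset.univ.sup fun w => G.dist v w

noncomputable def gDiam {V : Type*} [Fintype V] (G : SimpleGraph V) : ℕ :=
  Finset.univ.sup fun v => gEcc G v

noncomputable def gRad {V : Type*} [Fintype V] (G : SimpleGraph V) : ℕ :=
  sInf (Set.range fun v => gEcc G v)

def IsBDM {V : Type*} (G : SimpleGraph V) : Prop :=
  ∀ G' : SimpleGraph V, G'.Connected → gBoundary G' = gBoundary G →
    (∀ x ∈ gBoundary G, ∀ y ∈ gBoundary G, G'.dist x y = G.dist x y) →
    Nonempty (G ≃g G')

def IsCutVertex {V : Type*} (G : SimpleGraph V) (v : V) : Prop :=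
  ¬ (G.induce {u | u ≠ v}).Connected

def Chordal {V : Type*} (G : SimpleGraph V) : Prop :=
  ∀ n, 4 ≤ n → IsEmpty (cycleGraph n ↪g G)

def DistHereditary {V : Type*} (G : SimpleGraph V) : Prop :=
  ∀ s : Set V, (G.induce s).Connected →
    ∀ u v : s, (G.induce s).dist u v = G.dist u v

def Ptolemaic {V : Type*} (G : SimpleGraph V) : Prop :=
  Chordal G ∧ DistHereditary G

def IsIntervalGraph {V : Type*} (G : SimpleGraph V) : Prop :=
  ∃ a b : V → ℝ, (∀ v, a v ≤ b v) ∧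
    ∀ u v : V, u ≠ v →
      (G.Adj u v ↔ (Set.Icc (a u) (b u) ∩ Set.Icc (a v) (b v)).Nonempty)

def IsBipartiteGraph {V : Type*} (G : SimpleGraph V) : Prop :=
  ∃ s : Set V, ∀ a b : V, G.Adj a b → ((a ∈ s ∧ b ∉ s) ∨ (a ∉ s ∧ b ∈ s))

def IsSplitGraph {V : Type*} (G : SimpleGraph V) : Prop :=
  ∃ K : Set V, (∀ a ∈ K, ∀ b ∈ K, a ≠ b → G.Adj a b) ∧
    (∀ a ∉ K, ∀ b ∉ K, ¬ G.Adj a b)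

def IsFanCenter {V : Type*} (G : SimpleGraph V) (u : V) : Prop :=
  ∃ x : Fin 4 → V, Function.Injective x ∧ (∀ i, x i ≠ u) ∧
    (∀ i, G.Adj u (x i)) ∧
    (∀ i j : Fin 4, G.Adj (x i) (x j) ↔ (i.val + 1 = j.val ∨ j.val + 1 = i.val))

/-! Auxiliary machinery: certified distance matrices. -/

private lemma exists_walk_aux {V : Type*} (G : SimpleGraph V) (D : V → V → ℕ)
    (hwit : ∀ u v, u ≠ v → ∃ w, G.Adj u w ∧ D w v + 1 = D u v) :
    ∀ n u v, D u v = n → ∃ p : G.Walk u v, p.length ≤ n := by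
  intro n
  induction n using Nat.strong_induction_on with
  | _ n ih =>
    intro u v h
    by_cases huv : u = v
    · subst huv; exact ⟨.nil, by simp⟩
    · obtain ⟨w, hadj, hw⟩ := hwit u v huv
      have hlt : D w v < n := by omega
      obtain ⟨p, hp⟩ := ih _ hlt w v rfl
      exact ⟨.cons hadj p, by simp [SimpleGraph.Walk.length_cons]; omega⟩

private lemma le_walk_aux {V : Type*} (G : SimpleGraph V) (D : V → V → ℕ)
    (h0 : ∀ u, D u u = 0)
    (hstep : ∀ u w v, G.Adj u w → D u v ≤ D w v + 1) :
    ∀ {u v : V} (p : G.Walk u v), D u v ≤ p.length := by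
  intro u v p
  induction p with
  | nil => simp [h0]
  | cons hadj q ih =>
    simp only [SimpleGraph.Walk.length_cons]
    exact le_trans (hstep _ _ _ hadj) (Nat.add_le_add_right ih 1)

private lemma reachable_of_cert {V : Type*} (G : SimpleGraph V) (D : V → V → ℕ)
    (hwit : ∀ u v, u ≠ v → ∃ w, G.Adj u w ∧ D w v + 1 = D u v) (u v : V) :
    G.Reachable u v := by
  obtain ⟨p, -⟩ := exists_walk_aux G D hwit (D u v) u v rfl
  exact ⟨p⟩

private lemma dist_eq_of_cert {V : Type*} (G : SimpleGraph V) (D : V → V → ℕ)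
    (h0 : ∀ u, D u u = 0)
    (hstep : ∀ u w v, G.Adj u w → D u v ≤ D w v + 1)
    (hwit : ∀ u v, u ≠ v → ∃ w, G.Adj u w ∧ D w v + 1 = D u v) :
    ∀ u v, G.dist u v = D u v := by
  intro u v
  apply le_antisymm
  · obtain ⟨p, hp⟩ := exists_walk_aux G D hwit (D u v) u v rfl
    exact (SimpleGraph.dist_le p).trans hp
  · obtain ⟨p, hp⟩ :=
      (reachable_of_cert G D hwit u v).exists_walk_length_eq_dist
    exact hp ▸ le_walk_aux G D h0 hstep p

/-! The two concrete graphs. -/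

private def f1 : Fin 6 → Fin 6 → Bool
  | 0, 1 => true | 0, 2 => true | 0, 3 => true | 0, 4 => true | 0, 5 => true
  | 1, 0 => true | 2, 0 => true | 3, 0 => true | 4, 0 => true | 5, 0 => true
  | 1, 3 => true | 1, 4 => true | 1, 5 => true
  | 3, 1 => true | 4, 1 => true | 5, 1 => true
  | 2, 3 => true | 2, 4 => true | 2, 5 => true
  | 3, 2 => true | 4, 2 => true | 5, 2 => true
  | _, _ => false

private def f2 : Fin 6 → Fin 6 → Bool
  | 0, 1 => true | 1, 0 => true
  | 1, 3 => true | 1, 4 => true | 1, 5 => true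
  | 3, 1 => true | 4, 1 => true | 5, 1 => true
  | 2, 3 => true | 2, 4 => true | 2, 5 => true
  | 3, 2 => true | 4, 2 => true | 5, 2 => true
  | _, _ => false

private lemma f1s : ∀ a b : Fin 6, f1 a b = true → f1 b a = true := by decide
private lemma f1i : ∀ a : Fin 6, ¬ f1 a a = true := by decide
private lemma f2s : ∀ a b : Fin 6, f2 a b = true → f2 b a = true := by decide
private lemma f2i : ∀ a : Fin 6, ¬ f2 a a = true := by decide

private def myG1 : SimpleGraph (Fin 6) where
  Adj a b := f1 a b = true
  symm := ⟨fun a b h => f1s a b h⟩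
  loopless := ⟨fun a h => f1i a h⟩

private def myG2 : SimpleGraph (Fin 6) where
  Adj a b := f2 a b = true
  symm := ⟨fun a b h => f2s a b h⟩
  loopless := ⟨fun a h => f2i a h⟩

private instance : DecidableRel myG1.Adj := fun a b => inferInstanceAs (Decidable (f1 a b = true))
private instance : DecidableRel myG2.Adj := fun a b => inferInstanceAs (Decidable (f2 a b = true))

private def D1 : Fin 6 → Fin 6 → ℕ
  | u, v => [[0,1,1,1,1,1],[1,0,2,1,1,1],[1,2,0,1,1,1],
             [1,1,1,0,2,2],[1,1,1,2,0,2],[1,1,1,2,2,0]].getD u.val [] |>.getD v.val 0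

private def D2 : Fin 6 → Fin 6 → ℕ
  | u, v => [[0,1,3,2,2,2],[1,0,2,1,1,1],[3,2,0,1,1,1],
             [2,1,1,0,2,2],[2,1,1,2,0,2],[2,1,1,2,2,0]].getD u.val [] |>.getD v.val 0

private lemma hd1 : ∀ u v, myG1.dist u v = D1 u v :=
  dist_eq_of_cert myG1 D1 (by decide) (by decide) (by decide)

private lemma hd2 : ∀ u v, myG2.dist u v = D2 u v :=
  dist_eq_of_cert myG2 D2 (by decide) (by decide) (by decide)

private lemma hwit1 : ∀ u v : Fin 6, u ≠ v → ∃ w, myG1.Adj u w ∧ D1 w v + 1 = D1 u v := by decide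
private lemma hwit2 : ∀ u v : Fin 6, u ≠ v → ∃ w, myG2.Adj u w ∧ D2 w v + 1 = D2 u v := by decide

private lemma hconn1 : myG1.Connected := by
  rw [SimpleGraph.connected_iff]
  exact ⟨fun u v => reachable_of_cert myG1 D1 hwit1 u v, inferInstance⟩

private lemma hconn2 : myG2.Connected := by
  rw [SimpleGraph.connected_iff]
  exact ⟨fun u v => reachable_of_cert myG2 D2 hwit2 u v, inferInstance⟩

private lemma hb1 : gBoundary myG1 = {v | v ≠ 0} := by
  ext v
  simp only [gBoundary, Set.mem_setOf_eq, hd1]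
  revert v
  decide

private lemma hb2 : gBoundary myG2 = {v | v ≠ 1} := by
  ext v
  simp only [gBoundary, Set.mem_setOf_eq, hd2]
  revert v
  decide

private lemma ncard_ne (a : Fin 6) : ({v | v ≠ a} : Set (Fin 6)).ncard = 5 := by
  have h : ({v | v ≠ a} : Set (Fin 6)) = ↑(Finset.univ.erase a) := by
    ext v; simp
  rw [h, Set.ncard_coe_finset]
  simp [Finset.card_erase_of_mem]

theorem order_and_boundary_number_not_sufficient :
    ∃ G₁ G₂ : SimpleGraph (Fin 6), G₁.Connected ∧ G₂.Connected ∧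
      ¬ Nonempty (G₁ ≃g G₂) ∧
      (gBoundary G₁).ncard = 5 ∧ (gBoundary G₂).ncard = 5 ∧
      ∃ S : Set (Fin 6), S.ncard = 5 ∧ S = gBoundary G₁ ∧ S ≠ gBoundary G₂ ∧
        ∀ x ∈ S, ∀ y ∈ S, G₁.dist x y = G₂.dist x y := by
  refine ⟨myG1, myG2, hconn1, hconn2, ?_, ?_, ?_, {v | v ≠ 0}, ?_, hb1.symm, ?_, ?_⟩
  · rintro ⟨e⟩
    have h := Fintype.card_congr e.mapEdgeSet
    have h1 : Fintype.card myG1.edgeSet = 11 := by decide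
    have h2 : Fintype.card myG2.edgeSet = 7 := by decide
    omega
  · rw [hb1]; exact ncard_ne 0
  · rw [hb2]; exact ncard_ne 1
  · exact ncard_ne 0
  · rw [hb2]
    intro h
    have := Set.ext_iff.mp h 0
    simp at this
  · intro x hx y hy
    rw [hd1, hd2]
    have hx' : x ≠ 0 := hx
    have hy' : y ≠ 0 := hy
    revert hx' hy'
    revert x y
    decide
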